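/- Let A ∈ ℝ^{n×n} with A − I an M-matrix and b ∈ ℝ^n, and let x^{k} be the generalized Newton iterates x^{k+1} = (A − D(x^k))⁻¹ b. For k ≥ 1, define s_k = ∑ᵢ sign(x^k)ᵢ ∈ ℤ. Then s_{k+1} ≥ s_k for all k ≥ 1, and if D(x^{k+1}) ≠ D(x^k) then s_{k+1} ≥ s_k + 1; moreover −n ≤ s_k ≤ n for all k. -/

import Mathlib

open Matrix

def IsZMatrix {n : ℕ} (A : Matrix (Fin n) (Fin n) ℝ) : Prop :=
  ∀ i j, i ≠ j → A i j ≤ 0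

/-- An M-matrix: a Z-matrix that is invertible with entrywise nonnegative inverse. -/
def IsMMatrix {n : ℕ} (A : Matrix (Fin n) (Fin n) ℝ) : Prop :=
  IsZMatrix A ∧ IsUnit A ∧ ∀ i j, 0 ≤ A⁻¹ i j

/-- D(x) = diag(sign(x)). -/
noncomputable def signD {n : ℕ} (x : Fin n → ℝ) : Matrix (Fin n) (Fin n) ℝ :=
  Matrix.diagonal (fun i => Real.sign (x i))

/-- Componentwise absolute value. -/
def absVec {n : ℕ} (x : Fin n → ℝ) : Fin n → ℝ := fun i => |x i|

/-- Spectral (operator 2-) norm of a matrix. -/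
noncomputable def specNorm {n : ℕ} (A : Matrix (Fin n) (Fin n) ℝ) : ℝ :=
  ‖Matrix.toEuclideanCLM (𝕜 := ℝ) A‖

section aux

lemma my_sign_le_one (a : ℝ) : Real.sign a ≤ 1 := by
  rcases Real.sign_apply_eq a with h | h | h <;> rw [h] <;> norm_num

lemma my_neg_one_le_sign (a : ℝ) : -1 ≤ Real.sign a := by
  rcases Real.sign_apply_eq a with h | h | h <;> rw [h] <;> norm_num

lemma my_sign_mono {a b : ℝ} (hab : a ≤ b) : Real.sign a ≤ Real.sign b := by
  rcases lt_trichotomy a 0 with ha | ha | ha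
  · rw [Real.sign_of_neg ha]; exact my_neg_one_le_sign b
  · subst ha
    rw [Real.sign_zero]
    rcases eq_or_lt_of_le hab with hb | hb
    · rw [← hb, Real.sign_zero]
    · rw [Real.sign_of_pos hb]; norm_num
  · rw [Real.sign_of_pos ha, Real.sign_of_pos (lt_of_lt_of_le ha hab)]

lemma my_sign_gap {a b : ℝ} (hab : a ≤ b) (hne : Real.sign a ≠ Real.sign b) :
    Real.sign a + 1 ≤ Real.sign b := by
  have hm := my_sign_mono hab
  rcases Real.sign_apply_eq a with h | h | h <;> rcases Real.sign_apply_eq b with h' | h' | h' <;>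
    rw [h, h'] at hm hne ⊢ <;> norm_num at *

lemma my_sign_mul_ge {s a : ℝ} (h1 : -1 ≤ s) (h2 : s ≤ 1) : s * a ≤ Real.sign a * a := by
  rcases lt_trichotomy a 0 with ha | ha | ha
  · rw [Real.sign_of_neg ha]; nlinarith
  · simp [ha]
  · rw [Real.sign_of_pos ha]; nlinarith

/-- If a Z-matrix maps a positive vector to a positive vector, then preimages of
nonnegative vectors are nonnegative. -/
lemma zmat_nonneg {n : ℕ} (Z : Matrix (Fin n) (Fin n) ℝ) (hZ : IsZMatrix Z)
    (v : Fin n → ℝ) (hv : ∀ i, 0 < v i) (hZv : ∀ i, 0 < Z.mulVec v i)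
    (y : Fin n → ℝ) (hy : ∀ i, 0 ≤ Z.mulVec y i) : ∀ i, 0 ≤ y i := by
  by_contra hc
  push_neg at hc
  obtain ⟨i0, hi0⟩ := hc
  obtain ⟨j, -, hj⟩ := Finset.exists_min_image Finset.univ (fun i => y i / v i)
    ⟨i0, Finset.mem_univ i0⟩
  set t := y j / v j with ht
  have htneg : t < 0 :=
    lt_of_le_of_lt (hj i0 (Finset.mem_univ i0)) (div_neg_of_neg_of_pos hi0 (hv i0))
  have hyj : y j = t * v j := by
    rw [ht, div_mul_cancel₀ _ (hv j).ne']
  have hterm : ∀ i ∈ Finset.univ, Z j i * y i ≤ Z j i * (t * v i) := by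
    intro i _
    rcases eq_or_ne i j with rfl | hij
    · rw [← hyj]
    · have h1 : t * v i ≤ y i := (le_div_iff₀ (hv i)).mp (hj i (Finset.mem_univ i))
      exact mul_le_mul_of_nonpos_left h1 (hZ j i (Ne.symm hij))
  have hsum : Z.mulVec y j ≤ t * Z.mulVec v j := by
    have h2 := Finset.sum_le_sum hterm
    simp only [Matrix.mulVec, dotProduct, Finset.mul_sum]
    calc ∑ i, Z j i * y i ≤ ∑ i, Z j i * (t * v i) := h2
      _ = ∑ i, t * (Z j i * v i) := Finset.sum_congr rfl (fun i _ => by ring)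
  have : Z.mulVec y j < 0 := lt_of_le_of_lt hsum (mul_neg_of_neg_of_pos htneg (hZv j))
  exact absurd (hy j) (not_le.mpr this)

lemma zmat_isUnit {n : ℕ} (Z : Matrix (Fin n) (Fin n) ℝ) (hZ : IsZMatrix Z)
    (v : Fin n → ℝ) (hv : ∀ i, 0 < v i) (hZv : ∀ i, 0 < Z.mulVec v i) : IsUnit Z := by
  rw [← Matrix.mulVec_injective_iff_isUnit]
  intro y1 y2 hyy
  have hz : Z.mulVec (y1 - y2) = 0 := by
    rw [Matrix.mulVec_sub, hyy, sub_self]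
  have h1 : ∀ i, 0 ≤ (y1 - y2) i :=
    zmat_nonneg Z hZ v hv hZv _ (fun i => by rw [hz]; exact le_refl 0)
  have h2 : ∀ i, 0 ≤ (y2 - y1) i := by
    refine zmat_nonneg Z hZ v hv hZv _ (fun i => ?_)
    have : Z.mulVec (y2 - y1) = 0 := by rw [Matrix.mulVec_sub, hyy, sub_self]
    rw [this]; exact le_refl 0
  funext i
  have h1' := h1 i
  have h2' := h2 i
  simp only [Pi.sub_apply, sub_nonneg] at h1' h2'
  linarith

lemma sum_sign_int {n : ℕ} (f : Fin n → ℝ) : ∃ m : ℤ, ∑ i, Real.sign (f i) = (m : ℝ) := by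
  have h : ∀ i, ∃ z : ℤ, Real.sign (f i) = (z : ℝ) := fun i => by
    rcases Real.sign_apply_eq (f i) with h | h | h
    exacts [⟨-1, by simp [h]⟩, ⟨0, by simp [h]⟩, ⟨1, by simp [h]⟩]
  choose g hg using h
  refine ⟨∑ i, g i, ?_⟩
  push_cast
  exact Finset.sum_congr rfl (fun i _ => hg i)

end aux

theorem stmt_19 {n : ℕ} (A : Matrix (Fin n) (Fin n) ℝ)
    (h : IsMMatrix (A - 1)) (b : Fin n → ℝ) (x : ℕ → Fin n → ℝ)
    (hiter : ∀ k, x (k + 1) = (A - signD (x k))⁻¹.mulVec b) :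
    (∀ k, 1 ≤ k → ∃ m : ℤ, (∑ i, Real.sign (x k i)) = (m : ℝ)) ∧
    (∀ k, 1 ≤ k → (∑ i, Real.sign (x k i)) ≤ ∑ i, Real.sign (x (k + 1) i)) ∧
    (∀ k, 1 ≤ k → signD (x (k + 1)) ≠ signD (x k) →
      (∑ i, Real.sign (x k i)) + 1 ≤ ∑ i, Real.sign (x (k + 1) i)) ∧
    (∀ k, 1 ≤ k → -(n : ℝ) ≤ (∑ i, Real.sign (x k i)) ∧
      (∑ i, Real.sign (x k i)) ≤ (n : ℝ)) := by
  obtain ⟨hZA, huA, hinvA⟩ := h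
  have hdetA : IsUnit (A - 1).det := (Matrix.isUnit_iff_isUnit_det _).mp huA
  -- the positive test vector
  set v : Fin n → ℝ := (A - 1)⁻¹.mulVec (fun _ => 1) with hvdef
  have hv : ∀ i, 0 < v i := by
    intro i
    have hrow : ∃ j0, (A - 1)⁻¹ i j0 ≠ 0 := by
      by_contra hc
      push_neg at hc
      have hsurj : Function.Surjective ((A - 1)⁻¹).mulVec :=
        Matrix.mulVec_surjective_iff_isUnit.mpr (Matrix.isUnit_nonsing_inv_iff.mpr huA)
      obtain ⟨w, hw⟩ := hsurj (Pi.single i 1)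
      have h0 : ((A - 1)⁻¹.mulVec w) i = 1 := by rw [hw]; simp
      have h1 : ((A - 1)⁻¹.mulVec w) i = 0 := by
        simp only [Matrix.mulVec, dotProduct]
        exact Finset.sum_eq_zero (fun j _ => by rw [hc j, zero_mul])
      rw [h0] at h1
      norm_num at h1
    obtain ⟨j0, hj0⟩ := hrow
    have : v i = ∑ j, (A - 1)⁻¹ i j := by
      simp only [hvdef, Matrix.mulVec, dotProduct, mul_one]
    rw [this]
    exact Finset.sum_pos' (fun j _ => hinvA i j)
      ⟨j0, Finset.mem_univ j0, lt_of_le_of_ne (hinvA i j0) (Ne.symm hj0)⟩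
  have hA1v : (A - 1).mulVec v = (fun _ => 1) := by
    rw [hvdef, Matrix.mulVec_mulVec, Matrix.mul_nonsing_inv _ hdetA, Matrix.one_mulVec]
  -- properties of Z w := A - signD w
  have hZ' : ∀ w : Fin n → ℝ, IsZMatrix (A - signD w) := by
    intro w i j hij
    have := hZA i j hij
    simp only [Matrix.sub_apply, Matrix.one_apply_ne hij] at this
    simpa [signD, Matrix.sub_apply, Matrix.diagonal_apply_ne _ hij] using this
  have hZv : ∀ w : Fin n → ℝ, ∀ i, 0 < (A - signD w).mulVec v i := by
    intro w i
    have hsplit : A - signD w = (A - 1) + (1 - signD w) := (sub_add_sub_cancel A 1 (signD w)).symm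
    rw [hsplit, Matrix.add_mulVec]
    have h1 : (1 - signD w) = Matrix.diagonal (fun i => 1 - Real.sign (w i)) := by
      rw [signD, ← Matrix.diagonal_one, Matrix.diagonal_sub]
    have h2 : ((1 - signD w).mulVec v) i = (1 - Real.sign (w i)) * v i := by
      rw [h1, Matrix.mulVec_diagonal]
    simp only [Pi.add_apply, hA1v, h2]
    have h3 : 0 ≤ (1 - Real.sign (w i)) * v i :=
      mul_nonneg (by linarith [my_sign_le_one (w i)]) (hv i).le
    linarith
  have hu : ∀ w : Fin n → ℝ, IsUnit (A - signD w).det := fun w =>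
    (Matrix.isUnit_iff_isUnit_det _).mp (zmat_isUnit _ (hZ' w) v hv (hZv w))
  -- the iterates satisfy (A - signD (x k)).mulVec (x (k+1)) = b
  have hsolve : ∀ k, (A - signD (x k)).mulVec (x (k + 1)) = b := by
    intro k
    rw [hiter k, Matrix.mulVec_mulVec, Matrix.mul_nonsing_inv _ (hu (x k)),
      Matrix.one_mulVec]
  -- monotonicity of the iterates for k ≥ 1
  have hmono : ∀ k, 1 ≤ k → ∀ i, x k i ≤ x (k + 1) i := by
    intro k hk
    obtain ⟨m, rfl⟩ : ∃ m, k = m + 1 := ⟨k - 1, by omega⟩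
    set Z := A - signD (x (m + 1)) with hZdef
    have key : ∀ i, 0 ≤ (x (m + 2) - x (m + 1)) i := by
      refine zmat_nonneg Z (hZ' _) v hv (hZv _) _ (fun i => ?_)
      have e1 : Z.mulVec (x (m + 2) - x (m + 1))
          = b - Z.mulVec (x (m + 1)) := by
        rw [Matrix.mulVec_sub, hsolve (m + 1)]
      have e2 : b - Z.mulVec (x (m + 1))
          = ((A - signD (x m)) - Z).mulVec (x (m + 1)) := by
        rw [← hsolve m]
        exact (Matrix.sub_mulVec _ _ _).symm
      have e3 : (A - signD (x m)) - Z = Matrix.diagonal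
          (fun i => Real.sign (x (m + 1) i) - Real.sign (x m i)) := by
        rw [hZdef, signD, signD, ← Matrix.diagonal_sub]
        abel
      rw [e1, e2, e3, Matrix.mulVec_diagonal]
      have := my_sign_mul_ge (a := x (m + 1) i)
        (my_neg_one_le_sign (x m i)) (my_sign_le_one (x m i))
      nlinarith [this]
    intro i
    have := key i
    simpa [sub_nonneg] using this
  refine ⟨fun k _ => sum_sign_int _, fun k hk => ?_, fun k hk hne => ?_, fun k _ => ⟨?_, ?_⟩⟩
  · exact Finset.sum_le_sum (fun i _ => my_sign_mono (hmono k hk i))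
  · -- strict increase case
    have hex : ∃ i, Real.sign (x (k + 1) i) ≠ Real.sign (x k i) := by
      by_contra hc
      push_neg at hc
      exact hne (by unfold signD; exact congrArg _ (funext hc))
    obtain ⟨i, hi⟩ := hex
    have hgap : Real.sign (x k i) + 1 ≤ Real.sign (x (k + 1) i) :=
      my_sign_gap (hmono k hk i) (Ne.symm hi)
    have hnn : ∀ j ∈ Finset.univ, (0 : ℝ) ≤
        Real.sign (x (k + 1) j) - Real.sign (x k j) := fun j _ => by
      linarith [my_sign_mono (hmono k hk j)]
    have hsingle := Finset.single_le_sum hnn (Finset.mem_univ i)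
    have hdist : ∑ j, (Real.sign (x (k + 1) j) - Real.sign (x k j))
        = (∑ j, Real.sign (x (k + 1) j)) - ∑ j, Real.sign (x k j) :=
      Finset.sum_sub_distrib _ _
    rw [hdist] at hsingle
    linarith
  · calc -(n : ℝ) = ∑ _i : Fin n, (-1 : ℝ) := by simp
      _ ≤ ∑ i, Real.sign (x k i) := Finset.sum_le_sum (fun i _ => my_neg_one_le_sign _)
  · calc ∑ i, Real.sign (x k i) ≤ ∑ _i : Fin n, (1 : ℝ) :=
        Finset.sum_le_sum (fun i _ => my_sign_le_one _)
      _ = (n : ℝ) := by simp
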